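/- Let T be a tree, v a leaf of T with unique neighbor u, and T' = T - v. Let x_e be edge variables and define x'_e = x_e for edges not incident to u, and x'_e = x_e / (1 - t·x_{uv}) for edges of T' incident to u (assuming t·x_{uv} ≠ 1). Then the multivariate matching polynomials satisfy F_T(x, t) = (1 - t·x_{uv}) · F_{T'}(x', t). -/

import Mathlib

open Finset
open scoped Classical

/-- A matching of a simple graph: a finite set of edges, pairwise vertex-disjoint. -/
def IsMatchingSet {V : Type*} [DecidableEq V] (G : SimpleGraph V) (M : Finset (Sym2 V)) : Prop :=
  (∀ e ∈ M, e ∈ G.edgeSet) ∧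
    ∀ e ∈ M, ∀ f ∈ M, e ≠ f → ∀ v, v ∈ e → v ∉ f

/-- The finite set of all matchings of `G` (including the empty matching). -/
noncomputable def matchings {V : Type*} [Fintype V] [DecidableEq V] (G : SimpleGraph V) :
    Finset (Finset (Sym2 V)) :=
  Finset.univ.filter fun M => IsMatchingSet G M

/-- The multivariate matching polynomial
`F(x,t) = Σ_{M matching} (Π_{e∈M} x_e) (-t)^{|M|}`. -/
noncomputable def mmp {V : Type*} [Fintype V] [DecidableEq V] (G : SimpleGraph V)
    (x : Sym2 V → ℝ) (t : ℝ) : ℝ :=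
  ∑ M ∈ matchings G, (∏ e ∈ M, x e) * (-t) ^ M.card

/-- Deleting a leaf `v` (with unique neighbor `u`) from a tree `T` and rescaling the variables
on the edges incident to `u` by `1/(1 - t·x_{uv})` gives
`F_T(x,t) = (1 - t·x_{uv}) · F_{T'}(x',t)`. -/
theorem stmt_2 {V : Type*} [Fintype V] [DecidableEq V] (T T' : SimpleGraph V)
    (hT : T.IsTree) (v u : V) (huv : T.Adj u v)
    (hleaf : ∀ z, T.Adj v z ↔ z = u)
    (hT' : ∀ a b, T'.Adj a b ↔ T.Adj a b ∧ a ≠ v ∧ b ≠ v)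
    (x x' : Sym2 V → ℝ) (t : ℝ) (ht : t * x s(u, v) ≠ 1)
    (hx' : ∀ e ∈ T'.edgeSet,
      x' e = if u ∈ e then x e / (1 - t * x s(u, v)) else x e) :
    mmp T x t = (1 - t * x s(u, v)) * mmp T' x' t := by
  classical
  have hc0 : (1 : ℝ) - t * x s(u, v) ≠ 0 := sub_ne_zero_of_ne (Ne.symm ht)
  have huvne : u ≠ v := huv.ne
  -- edges of T containing v equal s(u,v)
  have hvE : ∀ e ∈ T.edgeSet, v ∈ e → e = s(u, v) := by
    intro e he hv
    induction e using Sym2.ind with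
    | _ a b =>
      rw [SimpleGraph.mem_edgeSet] at he
      rcases Sym2.mem_iff.mp hv with rfl | rfl
      · have : b = u := (hleaf b).mp he
        subst this
        exact Sym2.eq_swap
      · have : a = u := (hleaf a).mp he.symm
        subst this
        rfl
  have hT'mem : ∀ e, e ∈ T'.edgeSet ↔ e ∈ T.edgeSet ∧ v ∉ e := by
    intro e
    induction e using Sym2.ind with
    | _ a b =>
      simp only [SimpleGraph.mem_edgeSet, hT' a b, Sym2.mem_iff]
      constructor
      · rintro ⟨h, h1, h2⟩
        refine ⟨h, ?_⟩
        rintro (rfl | rfl) <;> simp_all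
      · rintro ⟨h, h2⟩
        push_neg at h2
        exact ⟨h, Ne.symm h2.1, Ne.symm h2.2⟩
  have hT'sub : T'.edgeSet ⊆ T.edgeSet := fun e he => ((hT'mem e).mp he).1
  have huvT' : s(u, v) ∉ T'.edgeSet := by
    intro h
    exact ((hT'mem _).mp h).2 (by simp)
  have huvT : s(u, v) ∈ T.edgeSet := huv
  -- matchings of T not containing s(u,v) are exactly matchings of T'
  have hfilter_not : (matchings T).filter (fun M => s(u, v) ∉ M) = matchings T' := by
    ext M
    simp only [matchings, mem_filter, mem_univ, true_and]
    simp only [IsMatchingSet]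
    constructor
    · rintro ⟨⟨hE, hD⟩, huvM⟩
      refine ⟨fun e he => (hT'mem e).mpr ⟨hE e he, fun hv => huvM ?_⟩, hD⟩
      have h2 := hvE e (hE e he) hv
      rwa [h2] at he
    · rintro ⟨hE, hD⟩
      exact ⟨⟨fun e he => hT'sub (hE e he), hD⟩, fun huvM => huvT' (hE _ huvM)⟩
  set c : ℝ := 1 - t * x s(u, v) with hc
  set f : Finset (Sym2 V) → ℝ := fun M => (∏ e ∈ M, x e) * (-t) ^ M.card with hf
  set An : Finset (Finset (Sym2 V)) :=
    (matchings T').filter (fun M => ∀ e ∈ M, u ∉ e) with hAn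
  set Au : Finset (Finset (Sym2 V)) :=
    (matchings T').filter (fun M => ¬ ∀ e ∈ M, u ∉ e) with hAu
  -- bijection for matchings containing the edge uv
  have hbij : ∑ M ∈ (matchings T).filter (fun M => s(u, v) ∈ M), f M
      = ∑ M ∈ An, f M * (x s(u, v) * (-t)) := by
    apply Finset.sum_nbij' (fun M => M.erase s(u, v)) (fun M => insert s(u, v) M)
    · -- erase maps into An
      intro M hM
      simp only [hAn, matchings, mem_filter, mem_univ, true_and] at hM ⊢
      simp only [IsMatchingSet] at hM ⊢
      obtain ⟨⟨hE, hD⟩, huvM⟩ := hM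
      refine ⟨⟨fun e he => ?_, fun e he f' hf' hne => hD e (mem_of_mem_erase he) f'
        (mem_of_mem_erase hf') hne⟩, ?_⟩
      · obtain ⟨hne, heM⟩ := mem_erase.mp he
        refine (hT'mem e).mpr ⟨hE e heM, fun hv => hne (hvE e (hE e heM) hv)⟩
      · intro e he hu
        obtain ⟨hne, heM⟩ := mem_erase.mp he
        exact hD s(u, v) huvM e heM (Ne.symm hne) u (by simp) hu
    · -- insert maps into the filter
      intro M hM
      simp only [hAn, matchings, mem_filter, mem_univ, true_and] at hM ⊢
      simp only [IsMatchingSet] at hM ⊢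
      obtain ⟨⟨hE, hD⟩, hu⟩ := hM
      have hvM : ∀ e ∈ M, v ∉ e := fun e he => ((hT'mem e).mp (hE e he)).2
      refine ⟨⟨fun e he => ?_, ?_⟩, mem_insert_self _ _⟩
      · rcases mem_insert.mp he with rfl | he
        · exact huvT
        · exact hT'sub (hE e he)
      · intro e he f' hf' hne w hwe hwf
        rcases mem_insert.mp he with rfl | he <;> rcases mem_insert.mp hf' with rfl | hf'
        · exact hne rfl
        · rcases Sym2.mem_iff.mp hwe with hw | hw
          · exact hu f' hf' (hw ▸ hwf)
          · exact hvM f' hf' (hw ▸ hwf)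
        · rcases Sym2.mem_iff.mp hwf with hw | hw
          · exact hu e he (hw ▸ hwe)
          · exact hvM e he (hw ▸ hwe)
        · exact hD e he f' hf' hne w hwe hwf
    · -- left inverse
      intro M hM
      simp only [mem_filter] at hM
      exact insert_erase hM.2
    · -- right inverse
      intro M hM
      simp only [hAn, matchings, mem_filter, mem_univ, true_and] at hM
      simp only [IsMatchingSet] at hM
      have : s(u, v) ∉ M := fun h => huvT' (hM.1.1 _ h)
      exact erase_insert this
    · -- values agree
      intro M hM
      simp only [mem_filter] at hM
      have huvM : s(u, v) ∈ M := hM.2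
      have key : M = insert s(u, v) (M.erase s(u, v)) := (insert_erase huvM).symm
      simp only [hf]
      conv_lhs => rw [key]
      rw [prod_insert (notMem_erase _ _), card_insert_of_notMem (notMem_erase _ _)]
      ring
  -- values on An
  have hAn_val : ∀ M ∈ An, (∏ e ∈ M, x' e) * (-t) ^ M.card = f M := by
    intro M hM
    simp only [hAn, matchings, mem_filter, mem_univ, true_and] at hM
    simp only [IsMatchingSet] at hM
    obtain ⟨⟨hE, hD⟩, hu⟩ := hM
    congr 1
    apply prod_congr rfl
    intro e he
    rw [hx' e (hE e he), if_neg (hu e he)]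
  -- values on Au
  have hAu_val : ∀ M ∈ Au, (∏ e ∈ M, x' e) * (-t) ^ M.card = f M / c := by
    intro M hM
    simp only [hAu, matchings, mem_filter, mem_univ, true_and] at hM
    simp only [IsMatchingSet] at hM
    obtain ⟨⟨hE, hD⟩, hu⟩ := hM
    push_neg at hu
    obtain ⟨e0, he0, hue0⟩ := hu
    have hrest : ∀ e ∈ M.erase e0, u ∉ e := by
      intro e he hue
      obtain ⟨hne, heM⟩ := mem_erase.mp he
      exact hD e0 he0 e heM (Ne.symm hne) u hue0 hue
    have h1 : ∏ e ∈ M, x' e = x' e0 * ∏ e ∈ M.erase e0, x' e :=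
      (mul_prod_erase M x' he0).symm
    have h2 : ∏ e ∈ M.erase e0, x' e = ∏ e ∈ M.erase e0, x e := by
      apply prod_congr rfl
      intro e he
      rw [hx' e (hE e (mem_of_mem_erase he)), if_neg (hrest e he)]
    have h3 : x' e0 = x e0 / c := by
      rw [hx' e0 (hE e0 he0), if_pos hue0]
    have h4 : ∏ e ∈ M, x e = x e0 * ∏ e ∈ M.erase e0, x e :=
      (mul_prod_erase M x he0).symm
    rw [h1, h2, h3]
    simp only [hf, h4]
    field_simp
  -- assemble
  have hsplitT : mmp T x t
      = (∑ M ∈ (matchings T).filter (fun M => s(u, v) ∈ M), f M)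
        + ∑ M ∈ matchings T', f M := by
    rw [mmp, ← hfilter_not, ← sum_filter_add_sum_filter_not (matchings T)
      (fun M => s(u, v) ∈ M) f]
  have hsplitT' : ∀ (g : Finset (Sym2 V) → ℝ),
      ∑ M ∈ matchings T', g M = (∑ M ∈ An, g M) + ∑ M ∈ Au, g M := by
    intro g
    rw [hAn, hAu, sum_filter_add_sum_filter_not]
  have hRHS : mmp T' x' t = (∑ M ∈ An, f M) + (∑ M ∈ Au, f M) / c := by
    rw [mmp, hsplitT' (fun M => (∏ e ∈ M, x' e) * (-t) ^ M.card),
      sum_congr rfl hAn_val, sum_congr rfl hAu_val, sum_div]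
  rw [hsplitT, hbij, hsplitT' f, hRHS, ← sum_mul]
  have hcc : c ≠ 0 := hc0
  field_simp
  ring
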